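/- arXiv:2209.05543 — 3 statements merged into one kernel-verified Lean document; each statement's English description precedes it below -/
import Mathlib

section
/- In the abstract setting where for each τ in an open subset K₊ of a Banach space K, P_τ : K → L(H) is the solution operator defined by B_τ(P_τ(η)y, v) = −B_η(y,v), the map τ ↦ P_τ is Fréchet differentiable with derivative D_τ P_τ(·; η) = P_τ(η) ∘ P_τ(·), i.e., for fixed ξ ∈ K, D_τ[P_τ(ξ)](η) = P_τ(η) P_τ(ξ) as operators on H. -/
/-- Fréchet differentiability of the solution operator `τ ↦ P_τ(ξ)` with derivative
`D_τ P_τ(ξ)(η) = P_τ(η) ∘ P_τ(ξ)` (Lemma 2.1 of the paper, abstract setting). -/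
theorem stmt2
    {H : Type*} [NormedAddCommGroup H] [InnerProductSpace ℂ H] [CompleteSpace H]
    {K : Type*} [NormedAddCommGroup K] [NormedSpace ℂ K]
    -- family of sesquilinear forms, linear in the parameter
    (Bform : K → H → H → ℂ)
    (hB_linη : ∀ (a : ℂ) (η η' : K) u v,
      Bform (a • η + η') u v = a * Bform η u v + Bform η' u v)
    (hB_add1 : ∀ η u u' v, Bform η (u + u') v = Bform η u v + Bform η u' v)
    (hB_smul1 : ∀ η (a : ℂ) u v, Bform η (a • u) v = a * Bform η u v)
    (hB_add2 : ∀ η u v v', Bform η u (v + v') = Bform η u v + Bform η u v')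
    (hB_smul2 : ∀ η (a : ℂ) u v, Bform η u (a • v) = (starRingEnd ℂ) a * Bform η u v)
    (C : ℝ) (hB_bdd : ∀ η u v, ‖Bform η u v‖ ≤ C * ‖η‖ * ‖u‖ * ‖v‖)
    -- the open set of admissible parameters, with locally uniform coercivity
    (Kplus : Set K) (hKplus : IsOpen Kplus)
    (hcoer : ∀ τ ∈ Kplus, ∃ c > 0, ∃ U ∈ nhds τ,
      ∀ τ' ∈ U, ∀ v : H, c * ‖v‖ ^ 2 ≤ (Bform τ' v v).re)
    -- the solution operator P, defined by B_τ(P_τ(η)y, v) = −B_η(y, v) on K₊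
    (P : K → K →L[ℂ] (H →L[ℂ] H))
    (hP : ∀ τ ∈ Kplus, ∀ (η : K) (y v : H), Bform τ (P τ η y) v = - Bform η y v) :
    ∀ τ ∈ Kplus, ∀ ξ : K,
      ∃ D : K →L[ℂ] (H →L[ℂ] H),
        (∀ η : K, D η = (P τ η).comp (P τ ξ)) ∧
        HasFDerivAt (fun s : K => P s ξ) D τ := by
  intro τ hτ ξ
  classical
  -- a nonnegative bound constant
  set C' : ℝ := max C 0 with hC'def
  have hC0 : 0 ≤ C' := le_max_right _ _
  have hbdd : ∀ η u v, ‖Bform η u v‖ ≤ C' * ‖η‖ * ‖u‖ * ‖v‖ := by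
    intro η u v
    refine (hB_bdd η u v).trans ?_
    have h1 : C ≤ C' := le_max_left _ _
    gcongr
  -- linearity in the parameter
  have hadd : ∀ η η' u v, Bform (η + η') u v = Bform η u v + Bform η' u v := by
    intro η η' u v
    have := hB_linη 1 η η' u v
    simpa using this
  have hsplit : ∀ (s : K) (u v : H),
      Bform s u v = Bform τ u v + Bform (s - τ) u v := by
    intro s u v
    have h := hadd τ (s - τ) u v
    rw [show τ + (s - τ) = s by abel] at h
    exact h
  have hneg1 : ∀ η (u v : H), Bform η (-u) v = - Bform η u v := by
    intro η u v
    have := hB_smul1 η (-1) u v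
    simpa using this
  -- the candidate derivative
  set D : K →L[ℂ] (H →L[ℂ] H) :=
    ((ContinuousLinearMap.compL ℂ H H H).flip (P τ ξ)).comp (P τ) with hDdef
  have hDapp : ∀ η : K, D η = (P τ η).comp (P τ ξ) := fun η => rfl
  refine ⟨D, hDapp, ?_⟩
  -- coercivity near τ
  obtain ⟨c, hc, U, hU, hcoerU⟩ := hcoer τ hτ
  set N : ℝ := C' * ‖P τ‖ * ‖P τ ξ‖ with hNdef
  have hN0 : 0 ≤ N := by positivity
  -- the key algebraic identity
  have key : ∀ s ∈ Kplus, ∀ (y v : H),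
      Bform s (P s ξ y - P τ ξ y - P τ (s - τ) (P τ ξ y)) v
        = - Bform (s - τ) (P τ (s - τ) (P τ ξ y)) v := by
    intro s hs y v
    have h1 := hP s hs ξ y v
    have h2 := hP τ hτ ξ y v
    have h3 := hP τ hτ (s - τ) (P τ ξ y) v
    have e1 : Bform s (P s ξ y - P τ ξ y - P τ (s - τ) (P τ ξ y)) v
        = Bform s (P s ξ y) v - Bform s (P τ ξ y) v
          - Bform s (P τ (s - τ) (P τ ξ y)) v := by
      rw [sub_eq_add_neg (P s ξ y - P τ ξ y), sub_eq_add_neg (P s ξ y),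
        hB_add1, hB_add1, hneg1, hneg1]
      ring
    rw [e1, h1, hsplit s (P τ ξ y) v, hsplit s (P τ (s - τ) (P τ ξ y)) v, h2, h3]
    ring
  -- pointwise quantitative estimate
  have hest : ∀ s ∈ U ∩ Kplus, ∀ y : H,
      c * ‖P s ξ y - P τ ξ y - P τ (s - τ) (P τ ξ y)‖
        ≤ N * ‖s - τ‖ ^ 2 * ‖y‖ := by
    intro s hs y
    set w : H := P s ξ y - P τ ξ y - P τ (s - τ) (P τ ξ y) with hwdef
    have hE : ‖P τ (s - τ) (P τ ξ y)‖ ≤ ‖P τ‖ * ‖s - τ‖ * (‖P τ ξ‖ * ‖y‖) := by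
      calc ‖P τ (s - τ) (P τ ξ y)‖ ≤ ‖P τ (s - τ)‖ * ‖P τ ξ y‖ :=
            ContinuousLinearMap.le_opNorm _ _
        _ ≤ (‖P τ‖ * ‖s - τ‖) * (‖P τ ξ‖ * ‖y‖) := by
            apply mul_le_mul (ContinuousLinearMap.le_opNorm _ _)
              (ContinuousLinearMap.le_opNorm _ _) (norm_nonneg _) (by positivity)
    have hchain : c * ‖w‖ ^ 2 ≤ N * ‖s - τ‖ ^ 2 * ‖y‖ * ‖w‖ := by
      have h0 : c * ‖w‖ ^ 2 ≤ (Bform s w w).re := hcoerU s hs.1 w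
      have h1 : (Bform s w w).re ≤ ‖Bform s w w‖ := Complex.re_le_norm _
      have h2 : ‖Bform s w w‖ = ‖Bform (s - τ) (P τ (s - τ) (P τ ξ y)) w‖ := by
        rw [key s hs.2 y w, norm_neg]
      have h3 : ‖Bform (s - τ) (P τ (s - τ) (P τ ξ y)) w‖
          ≤ C' * ‖s - τ‖ * (‖P τ‖ * ‖s - τ‖ * (‖P τ ξ‖ * ‖y‖)) * ‖w‖ := by
        refine (hbdd _ _ _).trans ?_
        gcongr
      rw [h2] at h1
      have : c * ‖w‖ ^ 2 ≤ C' * ‖s - τ‖ * (‖P τ‖ * ‖s - τ‖ * (‖P τ ξ‖ * ‖y‖)) * ‖w‖ :=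
        h0.trans (h1.trans h3)
      calc c * ‖w‖ ^ 2 ≤ C' * ‖s - τ‖ * (‖P τ‖ * ‖s - τ‖ * (‖P τ ξ‖ * ‖y‖)) * ‖w‖ := this
        _ = N * ‖s - τ‖ ^ 2 * ‖y‖ * ‖w‖ := by rw [hNdef]; ring
    rcases eq_or_lt_of_le (norm_nonneg w) with hw0 | hw0
    · rw [← hw0, mul_zero]
      positivity
    · have h5 : (c * ‖w‖) * ‖w‖ ≤ (N * ‖s - τ‖ ^ 2 * ‖y‖) * ‖w‖ := by
        calc (c * ‖w‖) * ‖w‖ = c * ‖w‖ ^ 2 := by ring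
          _ ≤ N * ‖s - τ‖ ^ 2 * ‖y‖ * ‖w‖ := hchain
      exact le_of_mul_le_mul_right h5 hw0
  -- operator-norm estimate
  have hop : ∀ s ∈ U ∩ Kplus,
      ‖P s ξ - P τ ξ - D (s - τ)‖ ≤ (N / c) * ‖s - τ‖ ^ 2 := by
    intro s hs
    apply ContinuousLinearMap.opNorm_le_bound _ (by positivity)
    intro y
    have hy := hest s hs y
    have hDy : (P s ξ - P τ ξ - D (s - τ)) y
        = P s ξ y - P τ ξ y - P τ (s - τ) (P τ ξ y) := by
      simp [hDapp]
    rw [hDy, show (N / c) * ‖s - τ‖ ^ 2 * ‖y‖ = (N * ‖s - τ‖ ^ 2 * ‖y‖) / c by ring,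
      le_div_iff₀ hc]
    linarith [hy]
  -- conclude Fréchet differentiability
  refine HasFDerivAt.of_isLittleO (Asymptotics.isLittleO_iff.mpr ?_)
  intro ε hε
  have hδ : 0 < ε / (N / c + 1) := by positivity
  have h1 : ∀ᶠ s in nhds τ, s ∈ U ∩ Kplus :=
    Filter.inter_mem hU (hKplus.mem_nhds hτ)
  have h2 : ∀ᶠ s in nhds τ, ‖s - τ‖ < ε / (N / c + 1) := by
    have hball := Metric.ball_mem_nhds τ hδ
    filter_upwards [hball] with s hsball
    rw [← dist_eq_norm]
    exact hsball
  filter_upwards [h1, h2] with s hs hds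
  have hop' := hop s hs
  have hNc : 0 ≤ N / c := by positivity
  calc ‖P s ξ - P τ ξ - D (s - τ)‖ ≤ (N / c) * ‖s - τ‖ ^ 2 := hop'
    _ = ((N / c) * ‖s - τ‖) * ‖s - τ‖ := by ring
    _ ≤ ε * ‖s - τ‖ := by
        have hsn : 0 ≤ ‖s - τ‖ := norm_nonneg _
        refine mul_le_mul_of_nonneg_right ?_ hsn
        calc (N / c) * ‖s - τ‖ ≤ (N / c) * (ε / (N / c + 1)) :=
              mul_le_mul_of_nonneg_left hds.le hNc
          _ ≤ (N / c + 1) * (ε / (N / c + 1)) :=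
              mul_le_mul_of_nonneg_right (by linarith) hδ.le
          _ = ε := by field_simp
end

section
/- With the solution operator bound ‖P_τ‖_{L(K, L(H))} ≤ C/c(τ) and ‖N(τ)‖ ≤ C_H/c(τ), the k-th Fréchet derivative of N satisfies ‖D^k N(τ)‖_{L^k(K, L(X,H))} ≤ k! C^k C_H / c(τ)^{k+1} for all k ∈ ℕ. -/
private lemma norm_listProd_le' {H : Type*} [NormedAddCommGroup H] [NormedSpace ℂ H]
    (l : List (H →L[ℂ] H)) : ‖l.prod‖ ≤ (l.map norm).prod := by
  induction l with
  | nil => simp only [List.prod_nil, List.map_nil]; exact ContinuousLinearMap.norm_id_le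
  | cons a l ih =>
    simp only [List.prod_cons, List.map_cons]
    exact le_trans (norm_mul_le _ _) (mul_le_mul_of_nonneg_left ih (norm_nonneg a))

/-- Derivative bounds (2.14): with `‖P_τ(η)‖ ≤ C‖η‖/c(τ)` and `‖N(τ)‖ ≤ C_H/c(τ)`, the
`k`-th Fréchet derivative of `N` satisfies `‖D^k N(τ)‖ ≤ k! C^k C_H / c(τ)^{k+1}`. -/
theorem stmt5
    {H : Type*} [NormedAddCommGroup H] [InnerProductSpace ℂ H] [CompleteSpace H]
    {X : Type*} [NormedAddCommGroup X] [InnerProductSpace ℂ X] [FiniteDimensional ℂ X]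
    {K : Type*} [NormedAddCommGroup K] [NormedSpace ℂ K]
    (N : K → X →L[ℂ] H) (P : K → K →L[ℂ] (H →L[ℂ] H))
    (τ : K) (C CH c : ℝ) (hC : 0 ≤ C) (hCH : 0 ≤ CH) (hc : 0 < c)
    (hPbound : ∀ η : K, ‖P τ η‖ ≤ C * ‖η‖ / c)
    (hNbound : ‖N τ‖ ≤ CH / c)
    -- the k-th derivative formula of Theorem 2.2
    (hderiv : ∀ (k : ℕ) (η : Fin k → K),
      (iteratedFDeriv ℂ k N τ) η =
        (∑ α : Equiv.Perm (Fin k),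
          (List.ofFn fun i => P τ (η (α i))).prod).comp (N τ)) :
    ∀ k : ℕ, ‖iteratedFDeriv ℂ k N τ‖ ≤ (k.factorial : ℝ) * C ^ k * CH / c ^ (k + 1) := by
  intro k
  have hbnd : 0 ≤ (k.factorial : ℝ) * C ^ k * CH / c ^ (k + 1) := by positivity
  refine ContinuousMultilinearMap.opNorm_le_bound hbnd fun η => ?_
  rw [hderiv k η]
  have hterm : ∀ α : Equiv.Perm (Fin k),
      ‖(List.ofFn fun i => P τ (η (α i))).prod‖ ≤ ∏ i : Fin k, (C * ‖η i‖ / c) := by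
    intro α
    refine le_trans (norm_listProd_le' _) ?_
    have h1 : ((List.ofFn fun i => P τ (η (α i))).map norm).prod
        = ∏ i : Fin k, ‖P τ (η (α i))‖ := by
      simp [List.map_ofFn, List.prod_ofFn, Function.comp]
    rw [h1]
    calc ∏ i : Fin k, ‖P τ (η (α i))‖
        ≤ ∏ i : Fin k, (C * ‖η (α i)‖ / c) :=
          Finset.prod_le_prod (fun _ _ => norm_nonneg _) (fun i _ => hPbound _)
      _ = ∏ i : Fin k, (C * ‖η i‖ / c) := Equiv.prod_comp α (fun i => C * ‖η i‖ / c)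
  calc ‖(∑ α : Equiv.Perm (Fin k), (List.ofFn fun i => P τ (η (α i))).prod).comp (N τ)‖
      ≤ ‖∑ α : Equiv.Perm (Fin k), (List.ofFn fun i => P τ (η (α i))).prod‖ * ‖N τ‖ :=
        ContinuousLinearMap.opNorm_comp_le _ _
    _ ≤ (∑ α : Equiv.Perm (Fin k), ∏ i : Fin k, (C * ‖η i‖ / c)) * (CH / c) := by
        have hs : ‖∑ α : Equiv.Perm (Fin k), (List.ofFn fun i => P τ (η (α i))).prod‖
            ≤ ∑ α : Equiv.Perm (Fin k), ∏ i : Fin k, (C * ‖η i‖ / c) :=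
          le_trans (norm_sum_le _ _) (Finset.sum_le_sum fun α _ => hterm α)
        have hp : 0 ≤ ∑ α : Equiv.Perm (Fin k), ∏ i : Fin k, (C * ‖η i‖ / c) :=
          Finset.sum_nonneg fun α _ => Finset.prod_nonneg fun i _ => by positivity
        exact mul_le_mul hs hNbound (norm_nonneg _) hp
    _ = (k.factorial : ℝ) * C ^ k * CH / c ^ (k + 1) * ∏ i : Fin k, ‖η i‖ := by
        rw [Finset.sum_const, Finset.card_univ, Fintype.card_perm, Fintype.card_fin]
        have : ∏ i : Fin k, (C * ‖η i‖ / c) = (C / c) ^ k * ∏ i : Fin k, ‖η i‖ := by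
          rw [Finset.prod_congr rfl (fun i _ => by ring : ∀ i ∈ Finset.univ,
            C * ‖η i‖ / c = (C / c) * ‖η i‖), Finset.prod_mul_distrib,
            Finset.prod_const, Finset.card_univ, Fintype.card_fin]
        rw [this, nsmul_eq_mul, div_pow]
        field_simp
        ring
end

section
/- In the setting of the previous statement, define η₂ := −(1/2) M D²Λ̃(0; η₁, η₁). Then η₂ = −(1/2) M D²Λ̃(0; υ, υ) + O(‖υ‖³), η₂ = O(‖υ‖²), and ‖η₁ + η₂ − υ‖_B ≤ C‖υ‖_B³ for small υ ∈ W. -/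
open Metric Set Filter Topology

set_option maxHeartbeats 1000000

lemma taylor2_est {B Y : Type*} [NormedAddCommGroup B] [NormedSpace ℝ B]
    [NormedAddCommGroup Y] [NormedSpace ℝ Y]
    {I : Set B} (hI : IsOpen I) (h0 : (0:B) ∈ I) {f : B → Y}
    (hf : ContDiffOn ℝ 4 f I) :
    ∃ K r : ℝ, 0 ≤ K ∧ 0 < r ∧ Metric.ball (0:B) r ⊆ I ∧ ∀ x : B, ‖x‖ < r →
      ‖f x - f 0 - fderiv ℝ f 0 x - (1/2 : ℝ) • fderiv ℝ (fderiv ℝ f) 0 x x‖ ≤ K * ‖x‖ ^ 3 := by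
  set D1 := fderiv ℝ f with hD1def
  set D2 := fderiv ℝ D1 with hD2def
  set D3 := fderiv ℝ D2 with hD3def
  have hD1 : ContDiffOn ℝ 3 D1 I := hf.fderiv_of_isOpen hI (by norm_num)
  have hD2 : ContDiffOn ℝ 2 D2 I := hD1.fderiv_of_isOpen hI (by norm_num)
  have hD3c : ContinuousOn D3 I := hD2.continuousOn_fderiv_of_isOpen hI (by norm_num)
  have hfd : ∀ x ∈ I, HasFDerivAt f (D1 x) x := fun x hx =>
    ((hf.differentiableOn (by norm_num)).differentiableAt (hI.mem_nhds hx)).hasFDerivAt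
  have hd1 : ∀ x ∈ I, HasFDerivAt D1 (D2 x) x := fun x hx =>
    ((hD1.differentiableOn (by norm_num)).differentiableAt (hI.mem_nhds hx)).hasFDerivAt
  have hd2 : ∀ x ∈ I, HasFDerivAt D2 (D3 x) x := fun x hx =>
    ((hD2.differentiableOn (by norm_num)).differentiableAt (hI.mem_nhds hx)).hasFDerivAt
  letI : NormedAddCommGroup (B →L[ℝ] B →L[ℝ] Y) := inferInstance
  letI : NormedSpace ℝ (B →L[ℝ] B →L[ℝ] Y) := inferInstance
  set K3 : ℝ := ‖D3 0‖ + 1 with hK3def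
  have hK3pos : 0 < K3 := by positivity
  have hev : ∀ᶠ y in 𝓝 (0:B), y ∈ I ∧ ‖D3 y‖ < K3 := by
    have h1 : ∀ᶠ y in 𝓝 (0:B), y ∈ I := hI.mem_nhds h0
    have h2 : ∀ᶠ y in 𝓝 (0:B), ‖D3 y‖ < K3 := by
      have hc : ContinuousAt (fun y => ‖D3 y‖) 0 :=
        ((hD3c.continuousAt (hI.mem_nhds h0)).norm)
      exact hc.eventually_lt_const (by simp [hK3def])
    exact h1.and h2
  obtain ⟨r1, hr1pos, hball⟩ := Metric.eventually_nhds_iff_ball.1 hev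
  have hsub : ball (0:B) r1 ⊆ I := fun y hy => (hball y hy).1
  -- Lipschitz bound on D2
  have Lip : ∀ x ∈ ball (0:B) r1, ‖D2 x - D2 0‖ ≤ K3 * ‖x‖ := by
    intro x hx
    have := (convex_ball (0:B) r1).norm_image_sub_le_of_norm_hasFDerivWithin_le
      (fun y hy => (hd2 y (hsub hy)).hasFDerivWithinAt)
      (fun y hy => (hball y hy).2.le) (mem_ball_self hr1pos) hx
    simpa using this
  -- first order Taylor bound on D1
  have claim1 : ∀ x : B, ‖x‖ < r1 → ‖D1 x - D1 0 - D2 0 x‖ ≤ K3 * ‖x‖ * ‖x‖ := by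
    intro x hx
    have hcb : closedBall (0:B) ‖x‖ ⊆ ball (0:B) r1 := fun y hy => by
      rw [mem_closedBall_zero_iff] at hy
      rw [mem_ball_zero_iff]; linarith
    have hderiv : ∀ y ∈ closedBall (0:B) ‖x‖,
        HasFDerivWithinAt (fun z => D1 z - D1 0 - D2 0 z) (D2 y - D2 0)
          (closedBall (0:B) ‖x‖) y := by
      intro y hy
      exact (((hd1 y (hsub (hcb hy))).sub_const (D1 0)).sub
        ((D2 0).hasFDerivAt)).hasFDerivWithinAt
    have hbd : ∀ y ∈ closedBall (0:B) ‖x‖, ‖D2 y - D2 0‖ ≤ K3 * ‖x‖ := by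
      intro y hy
      refine (Lip y (hcb hy)).trans ?_
      rw [mem_closedBall_zero_iff] at hy
      nlinarith
    have := (convex_closedBall (0:B) ‖x‖).norm_image_sub_le_of_norm_hasFDerivWithin_le
      hderiv hbd (mem_closedBall_self (norm_nonneg x)) (mem_closedBall_zero_iff.2 le_rfl)
    simpa using this
  -- symmetry of second derivative
  have Hsymm : ∀ v w : B, D2 0 v w = D2 0 w v := by
    intro v w
    exact second_derivative_symmetric_of_eventually_of_real
      (Filter.eventually_of_mem (hI.mem_nhds h0) (fun y hy => hfd y hy)) (hd1 0 h0) v w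
  -- derivative of the quadratic term
  have hq : ∀ a : B, HasFDerivAt (fun z : B => (1/2:ℝ) • (D2 0 z z)) (D2 0 a) a := by
    intro a
    have h1 : HasFDerivAt (fun z : B => (D2 0) z z)
        ((D2 0 a).comp (ContinuousLinearMap.id ℝ B) + (D2 0).flip a) a :=
      (D2 0).hasFDerivAt.clm_apply (hasFDerivAt_id a)
    have h2 := h1.const_smul (1/2:ℝ)
    have heq : (1/2:ℝ) • ((D2 0 a).comp (ContinuousLinearMap.id ℝ B) + (D2 0).flip a)
        = D2 0 a := by
      ext w
      simp only [ContinuousLinearMap.smul_apply, ContinuousLinearMap.add_apply,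
        ContinuousLinearMap.coe_comp', Function.comp_apply, ContinuousLinearMap.coe_id',
        id_eq, ContinuousLinearMap.flip_apply]
      rw [Hsymm w a, ← two_smul ℝ (D2 0 a w), smul_smul]
      norm_num
    rw [heq] at h2
    exact h2
  refine ⟨K3, r1, hK3pos.le, hr1pos, hsub, ?_⟩
  intro x hx
  have hcb : closedBall (0:B) ‖x‖ ⊆ ball (0:B) r1 := fun y hy => by
    rw [mem_closedBall_zero_iff] at hy
    rw [mem_ball_zero_iff]; linarith
  have hderiv : ∀ y ∈ closedBall (0:B) ‖x‖,
      HasFDerivWithinAt (fun z => f z - f 0 - D1 0 z - (1/2:ℝ) • (D2 0 z z))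
        (D1 y - D1 0 - D2 0 y) (closedBall (0:B) ‖x‖) y := by
    intro y hy
    exact ((((hfd y (hsub (hcb hy))).sub_const (f 0)).sub
      ((D1 0).hasFDerivAt)).sub (hq y)).hasFDerivWithinAt
  have hbd : ∀ y ∈ closedBall (0:B) ‖x‖, ‖D1 y - D1 0 - D2 0 y‖ ≤ K3 * ‖x‖ ^ 2 := by
    intro y hy
    have hyr : ‖y‖ < r1 := by
      rw [mem_closedBall_zero_iff] at hy; linarith
    refine (claim1 y hyr).trans ?_
    rw [mem_closedBall_zero_iff] at hy
    have h1 : ‖y‖ * ‖y‖ ≤ ‖x‖ ^ 2 := by nlinarith [norm_nonneg y]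
    calc K3 * ‖y‖ * ‖y‖ = K3 * (‖y‖ * ‖y‖) := by ring
      _ ≤ K3 * ‖x‖ ^ 2 := mul_le_mul_of_nonneg_left h1 hK3pos.le
  have h := (convex_closedBall (0:B) ‖x‖).norm_image_sub_le_of_norm_hasFDerivWithin_le
    hderiv hbd (mem_closedBall_self (norm_nonneg x)) (mem_closedBall_zero_iff.2 le_rfl)
  simp only [map_zero, sub_zero, smul_zero, sub_self] at h
  exact h.trans (le_of_eq (by ring))

/-- Second-order series-reversion estimate: with `η₁ = M(Λ̃(υ) − Λ̃(0))` and
`η₂ = −(1/2) M D²Λ̃(0; η₁, η₁)`, one has `η₂ = −(1/2) M D²Λ̃(0; υ, υ) + O(‖υ‖³)`,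
`η₂ = O(‖υ‖²)`, and `‖η₁ + η₂ − υ‖ ≤ C‖υ‖³` for small `υ ∈ W`. -/
theorem stmt11
    {B : Type*} [NormedAddCommGroup B] [NormedSpace ℝ B]
    {Y : Type*} [NormedAddCommGroup Y] [NormedSpace ℝ Y] [FiniteDimensional ℝ Y]
    (I : Set B) (hI : IsOpen I) (h0 : (0 : B) ∈ I)
    (Λ : B → Y) (hΛ : ContDiffOn ℝ 4 Λ I)
    (F : B →L[ℝ] Y) (hF : HasFDerivAt Λ F 0)
    (W : Submodule ℝ B) (hinj : ∀ x ∈ W, F x = 0 → x = 0)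
    (M : Y →L[ℝ] B) (hM : ∀ w ∈ W, M (F w) = w)
    (hMrange : ∀ y : Y, M y ∈ W) :
    ∃ C : ℝ, ∃ δ > (0 : ℝ), ∀ υ ∈ W, ‖υ‖ < δ → segment ℝ 0 υ ⊆ I →
      let η₁ := M (Λ υ - Λ 0)
      let η₂ := -((1 / 2 : ℝ) • M ((iteratedFDeriv ℝ 2 Λ 0) ![η₁, η₁]))
      ‖η₂ - (-((1 / 2 : ℝ) • M ((iteratedFDeriv ℝ 2 Λ 0) ![υ, υ])))‖ ≤ C * ‖υ‖ ^ 3 ∧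
      ‖η₂‖ ≤ C * ‖υ‖ ^ 2 ∧
      ‖η₁ + η₂ - υ‖ ≤ C * ‖υ‖ ^ 3 := by
  obtain ⟨K, r, hK, hr, hrI, htay⟩ := taylor2_est hI h0 hΛ
  set H := fderiv ℝ (fderiv ℝ Λ) 0 with hHdef
  have hFd : fderiv ℝ Λ 0 = F := hF.fderiv
  have h2 : ∀ x y : B, iteratedFDeriv ℝ 2 Λ 0 ![x, y] = H x y := by
    intro x y
    rw [iteratedFDeriv_two_apply, hHdef]
    simp
  set a : ℝ := ‖M‖ with hadef
  set b : ℝ := ‖H‖ with hbdef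
  have ha : 0 ≤ a := norm_nonneg M
  have hb : 0 ≤ b := norm_nonneg H
  set C₁ : ℝ := a * K + a * b with hC₁def
  have hC₁0 : 0 ≤ C₁ := by positivity
  set C₂ : ℝ := a * b * C₁ * (2 + C₁) with hC₂def
  have hC₂0 : 0 ≤ C₂ := by positivity
  set C₃ : ℝ := a * b * (1 + C₁) ^ 2 with hC₃def
  have hC₃0 : 0 ≤ C₃ := by positivity
  clear_value C₂ C₃
  clear_value C₁
  clear_value a b
  refine ⟨C₂ + C₃ + a * K + 1, min r 1, lt_min hr one_pos, ?_⟩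
  intro υ hυW hυn _
  intro η₁ η₂
  have hη₁ : η₁ = M (Λ υ - Λ 0) := rfl
  have hη₂ : η₂ = -((1 / 2 : ℝ) • M (H η₁ η₁)) := by
    show -((1 / 2 : ℝ) • M ((iteratedFDeriv ℝ 2 Λ 0) ![η₁, η₁])) = _
    rw [h2]
  clear_value η₁ η₂
  set t : ℝ := ‖υ‖ with htdef
  have ht0 : 0 ≤ t := norm_nonneg υ
  have htr : t < r := lt_of_lt_of_le hυn (min_le_left _ _)
  have ht1 : t ≤ 1 := le_of_lt (lt_of_lt_of_le hυn (min_le_right _ _))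
  set R : Y := Λ υ - Λ 0 - F υ - (1 / 2 : ℝ) • (H υ υ) with hRdef
  clear_value R
  have hR : ‖R‖ ≤ K * t ^ 3 := by
    have h := htay υ htr
    rwa [hFd, ← hRdef] at h
  have hdecomp : Λ υ - Λ 0 = F υ + (1 / 2 : ℝ) • (H υ υ) + R := by
    rw [hRdef]; abel
  have he : η₁ - υ = (1 / 2 : ℝ) • M (H υ υ) + M R := by
    rw [hη₁, hdecomp, map_add, map_add, map_smul, hM υ hυW]; abel
  have hMR : ‖M R‖ ≤ a * K * t ^ 3 := by
    calc ‖M R‖ ≤ a * ‖R‖ := by rw [hadef]; exact M.le_opNorm R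
      _ ≤ a * (K * t ^ 3) := by gcongr
      _ = a * K * t ^ 3 := by ring
  have hHυυ : ‖H υ υ‖ ≤ b * t * t := by rw [hbdef, htdef]; exact H.le_opNorm₂ υ υ
  have hebound : ‖η₁ - υ‖ ≤ C₁ * t ^ 2 := by
    rw [he]
    calc ‖(1 / 2 : ℝ) • M (H υ υ) + M R‖
        ≤ ‖(1 / 2 : ℝ) • M (H υ υ)‖ + ‖M R‖ := norm_add_le _ _
      _ = (1 / 2) * ‖M (H υ υ)‖ + ‖M R‖ := by
          rw [norm_smul]; norm_num
      _ ≤ (1 / 2) * (a * (b * t * t)) + a * K * t ^ 3 := by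
          gcongr
          calc ‖M (H υ υ)‖ ≤ a * ‖H υ υ‖ := by rw [hadef]; exact M.le_opNorm _
            _ ≤ a * (b * t * t) := by gcongr
      _ ≤ C₁ * t ^ 2 := by
          rw [hC₁def]
          nlinarith [mul_nonneg (mul_nonneg ha hb) (mul_nonneg ht0 ht0),
            mul_nonneg (mul_nonneg ha hK) (mul_nonneg ht0 ht0)]
  have hη₁n : ‖η₁‖ ≤ (1 + C₁) * t := by
    calc ‖η₁‖ = ‖υ + (η₁ - υ)‖ := by rw [add_sub_cancel]
      _ ≤ ‖υ‖ + ‖η₁ - υ‖ := norm_add_le _ _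
      _ ≤ t + C₁ * t ^ 2 := by rw [← htdef]; gcongr
      _ ≤ (1 + C₁) * t := by nlinarith [mul_nonneg hC₁0 (mul_nonneg ht0 (sub_nonneg.2 ht1))]
  -- goal 1
  have hgoal1 : ‖η₂ - (-((1 / 2 : ℝ) • M (H υ υ)))‖ ≤ C₂ * t ^ 3 := by
    have hbil : H η₁ η₁ - H υ υ = H (η₁ - υ) η₁ + H υ (η₁ - υ) := by
      simp only [map_sub, ContinuousLinearMap.sub_apply]
      abel
    have hform : η₂ - (-((1 / 2 : ℝ) • M (H υ υ)))
        = -((1 / 2 : ℝ) • M (H (η₁ - υ) η₁ + H υ (η₁ - υ))) := by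
      rw [hη₂, ← hbil, map_sub, smul_sub]
      abel
    rw [hform, norm_neg, norm_smul]
    have s1 : ‖H (η₁ - υ) η₁‖ ≤ b * (C₁ * t ^ 2) * ((1 + C₁) * t) := by
      calc ‖H (η₁ - υ) η₁‖ ≤ b * ‖η₁ - υ‖ * ‖η₁‖ := by rw [hbdef]; exact H.le_opNorm₂ _ _
        _ ≤ b * (C₁ * t ^ 2) * ((1 + C₁) * t) := by
            gcongr <;> positivity
    have s2 : ‖H υ (η₁ - υ)‖ ≤ b * t * (C₁ * t ^ 2) := by
      calc ‖H υ (η₁ - υ)‖ ≤ b * ‖υ‖ * ‖η₁ - υ‖ := by rw [hbdef]; exact H.le_opNorm₂ _ _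
        _ ≤ b * t * (C₁ * t ^ 2) := by rw [← htdef]; gcongr
    calc ‖(1 / 2 : ℝ)‖ * ‖M (H (η₁ - υ) η₁ + H υ (η₁ - υ))‖
        = (1 / 2) * ‖M (H (η₁ - υ) η₁ + H υ (η₁ - υ))‖ := by norm_num
      _ ≤ (1 / 2) * (a * (‖H (η₁ - υ) η₁‖ + ‖H υ (η₁ - υ)‖)) := by
          gcongr
          calc ‖M (H (η₁ - υ) η₁ + H υ (η₁ - υ))‖
              ≤ a * ‖H (η₁ - υ) η₁ + H υ (η₁ - υ)‖ := by rw [hadef]; exact M.le_opNorm _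
            _ ≤ a * (‖H (η₁ - υ) η₁‖ + ‖H υ (η₁ - υ)‖) := by
                gcongr; exact norm_add_le _ _
      _ ≤ (1 / 2) * (a * (b * (C₁ * t ^ 2) * ((1 + C₁) * t) + b * t * (C₁ * t ^ 2))) := by
          gcongr
      _ = (1 / 2) * ((a * b * C₁ * (2 + C₁)) * t ^ 3) := by ring
      _ ≤ C₂ * t ^ 3 := by
          rw [hC₂def]
          have h0X : (0:ℝ) ≤ a * b * C₁ * (2 + C₁) := by positivity
          linarith [mul_nonneg h0X (pow_nonneg ht0 3)]
  have hgoal2 : ‖η₂‖ ≤ C₃ * t ^ 2 := by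
    rw [hη₂, norm_neg, norm_smul]
    calc ‖(1 / 2 : ℝ)‖ * ‖M (H η₁ η₁)‖ = (1 / 2) * ‖M (H η₁ η₁)‖ := by norm_num
      _ ≤ (1 / 2) * (a * (b * ((1 + C₁) * t) * ((1 + C₁) * t))) := by
          gcongr
          calc ‖M (H η₁ η₁)‖ ≤ a * ‖H η₁ η₁‖ := by rw [hadef]; exact M.le_opNorm _
            _ ≤ a * (b * ‖η₁‖ * ‖η₁‖) := by gcongr; rw [hbdef]; exact H.le_opNorm₂ _ _
            _ ≤ a * (b * ((1 + C₁) * t) * ((1 + C₁) * t)) := by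
                gcongr <;> positivity
      _ = (1 / 2) * ((a * b * (1 + C₁) ^ 2) * t ^ 2) := by ring
      _ ≤ C₃ * t ^ 2 := by
          rw [hC₃def]
          have h0X : (0:ℝ) ≤ a * b * (1 + C₁) ^ 2 := by positivity
          linarith [mul_nonneg h0X (pow_nonneg ht0 2)]
  have hgoal3 : ‖η₁ + η₂ - υ‖ ≤ (C₂ + a * K) * t ^ 3 := by
    have hsplit : η₁ + η₂ - υ = M R + (η₂ - (-((1 / 2 : ℝ) • M (H υ υ)))) := by
      have : η₁ - υ = (1 / 2 : ℝ) • M (H υ υ) + M R := he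
      calc η₁ + η₂ - υ = (η₁ - υ) + η₂ := by abel
        _ = ((1 / 2 : ℝ) • M (H υ υ) + M R) + η₂ := by rw [this]
        _ = M R + (η₂ - (-((1 / 2 : ℝ) • M (H υ υ)))) := by abel
    rw [hsplit]
    calc ‖M R + (η₂ - (-((1 / 2 : ℝ) • M (H υ υ))))‖
        ≤ ‖M R‖ + ‖η₂ - (-((1 / 2 : ℝ) • M (H υ υ)))‖ := norm_add_le _ _
      _ ≤ a * K * t ^ 3 + C₂ * t ^ 3 := add_le_add hMR hgoal1
      _ = (C₂ + a * K) * t ^ 3 := by ring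
  refine ⟨?_, ?_, ?_⟩
  · rw [h2 υ υ]
    refine hgoal1.trans ?_
    have h1 : (0:ℝ) ≤ (C₃ + a * K + 1) * t ^ 3 := by positivity
    linarith [h1]
  · refine hgoal2.trans ?_
    have h1 : (0:ℝ) ≤ (C₂ + a * K + 1) * t ^ 2 := by positivity
    linarith [h1]
  · refine hgoal3.trans ?_
    have h1 : (0:ℝ) ≤ (C₃ + 1) * t ^ 3 := by positivity
    linarith [h1]
end
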